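/- Let c ∈ C with c₁,c₂ ≤ c₃ ≤ c₁+c₂, m ≥ 1 with μ(c) ≥ m, and set δ = π^{c₁+c₂−c₃−m} ∈ O_m. Then the map η sending a matrix in P_{c−mρ} with diagonal (t₁,t₂,t₃), (2,1)-entry π^{c₁−m}x, (3,1)-entry π^{c₃−m}z, (3,2)-entry π^{c₂−m}y to the element of B^δ_m with the same diagonal and entries x, y, z (all reduced mod 𝔪^m) is a surjective group homomorphism from P_{c−mρ} onto B^δ_m. -/

import Mathlib

open Matrix

/-- Elements of `B^δ_m`: a triple `(x,y,z) ∈ R³` together with unit diagonal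
`(t₁,t₂,t₃) ∈ (Rˣ)³`. -/
abbrev BType (R : Type*) [CommRing R] := (R × R × R) × (Rˣ × Rˣ × Rˣ)

/-- Multiplication of `B^δ_m` (in the matrix presentation): the product of
`((x,y,z),(t₁,t₂,t₃))` and `((x',y',z'),(t₁',t₂',t₃'))` is
`((xt₁'+t₂x', yt₂'+t₃y', zt₁'+δyx'+t₃z'), (t₁t₁',t₂t₂',t₃t₃'))`. -/
def bMul {R : Type*} [CommRing R] (δ : R) (a b : BType R) : BType R :=
  ((a.1.1 * (b.2.1 : R) + (a.2.2.1 : R) * b.1.1,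
    a.1.2.1 * (b.2.2.1 : R) + (a.2.2.2 : R) * b.1.2.1,
    a.1.2.2 * (b.2.1 : R) + δ * a.1.2.1 * b.1.1 + (a.2.2.2 : R) * b.1.2.2),
   (a.2.1 * b.2.1, a.2.2.1 * b.2.2.1, a.2.2.2 * b.2.2.2))

/-- The parahoric-type subgroup `P_d ⊆ GL₃(O)`: matrices whose `(2,1)`-entry lies in
`𝔪^{d₁}`, `(3,1)`-entry in `𝔪^{d₃}` and `(3,2)`-entry in `𝔪^{d₂}` (1-based indices). -/
def pSet {O : Type*} [CommRing O] (π : O) (d₁ d₂ d₃ : ℕ) : Set (GL (Fin 3) O) :=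
  {g | g.val 1 0 ∈ (Ideal.span {π} : Ideal O) ^ d₁ ∧
    g.val 2 0 ∈ (Ideal.span {π} : Ideal O) ^ d₃ ∧
    g.val 2 1 ∈ (Ideal.span {π} : Ideal O) ^ d₂}

/-- Condition under which we can read off the data for `η g`. -/
def etaCond {O : Type*} [CommRing O] (π : O) (a b c : ℕ) (I : Ideal O)
    (g : GL (Fin 3) O) : Prop :=
  (∃ x, g.val 1 0 = π ^ a * x) ∧ (∃ y, g.val 2 1 = π ^ b * y) ∧
  (∃ z, g.val 2 0 = π ^ c * z) ∧
  IsUnit (Ideal.Quotient.mk I (g.val 0 0)) ∧ IsUnit (Ideal.Quotient.mk I (g.val 1 1)) ∧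
  IsUnit (Ideal.Quotient.mk I (g.val 2 2))

open Classical in
/-- The map `η`, defined by choice on matrices satisfying `etaCond`. -/
noncomputable def etaFun {O : Type*} [CommRing O] (π : O) (a b c : ℕ) (I : Ideal O)
    (g : GL (Fin 3) O) : BType (O ⧸ I) :=
  if hg : etaCond π a b c I g then
    ((Ideal.Quotient.mk I hg.1.choose, Ideal.Quotient.mk I hg.2.1.choose,
      Ideal.Quotient.mk I hg.2.2.1.choose),
     (hg.2.2.2.1.unit, hg.2.2.2.2.1.unit, hg.2.2.2.2.2.unit))
  else ((0, 0, 0), (1, 1, 1))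

lemma etaFun_spec {O : Type*} [CommRing O] [IsDomain O] {π : O} (hπ : π ≠ 0)
    {a b c : ℕ} {I : Ideal O} {g : GL (Fin 3) O} (hg : etaCond π a b c I g) {x y z : O}
    (hx : g.val 1 0 = π ^ a * x) (hy : g.val 2 1 = π ^ b * y)
    (hz : g.val 2 0 = π ^ c * z) :
    (etaFun π a b c I g).1 =
      (Ideal.Quotient.mk I x, Ideal.Quotient.mk I y, Ideal.Quotient.mk I z) ∧
    ((etaFun π a b c I g).2.1 : O ⧸ I) = Ideal.Quotient.mk I (g.val 0 0) ∧
    ((etaFun π a b c I g).2.2.1 : O ⧸ I) = Ideal.Quotient.mk I (g.val 1 1) ∧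
    ((etaFun π a b c I g).2.2.2 : O ⧸ I) = Ideal.Quotient.mk I (g.val 2 2) := by
  have hx' : hg.1.choose = x :=
    mul_left_cancel₀ (pow_ne_zero a hπ) (hg.1.choose_spec.symm.trans hx)
  have hy' : hg.2.1.choose = y :=
    mul_left_cancel₀ (pow_ne_zero b hπ) (hg.2.1.choose_spec.symm.trans hy)
  have hz' : hg.2.2.1.choose = z :=
    mul_left_cancel₀ (pow_ne_zero c hπ) (hg.2.2.1.choose_spec.symm.trans hz)
  rw [etaFun, dif_pos hg]
  exact ⟨by rw [hx', hy', hz'], hg.2.2.2.1.unit_spec, hg.2.2.2.2.1.unit_spec,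
    hg.2.2.2.2.2.unit_spec⟩

/-- For `c` in the cone, `m ≥ 1` with `μ(c) ≥ m`, and `δ = π^{c₁+c₂−c₃−m} mod 𝔪^m`,
the map `η` sending `g ∈ P_{c−mρ}` with diagonal `(t₁,t₂,t₃)`, `(2,1)`-entry
`π^{c₁−m}x`, `(3,1)`-entry `π^{c₃−m}z`, `(3,2)`-entry `π^{c₂−m}y` to
`((x̄,ȳ,z̄),(t̄₁,t̄₂,t̄₃)) ∈ B^δ_m` is a surjective group homomorphism from
`P_{c−mρ}` onto `B^δ_m`. -/
theorem stmt_14 (O : Type*) [CommRing O] [IsDomain O] [IsDiscreteValuationRing O]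
    (π : O) (hπ : Irreducible π) (c₁ c₂ c₃ m : ℕ)
    (h1 : c₁ ≤ c₃) (h2 : c₂ ≤ c₃) (h3 : c₃ ≤ c₁ + c₂) (hm : 1 ≤ m)
    (hμ : m ≤ min (c₁ + c₂ - c₃) (min (c₃ - c₁) (c₃ - c₂))) :
    ∃ η : GL (Fin 3) O → BType (O ⧸ (Ideal.span {π} : Ideal O) ^ m),
      (∀ g ∈ pSet π (c₁ - m) (c₂ - m) (c₃ - m), ∀ x y z : O,
        g.val 1 0 = π ^ (c₁ - m) * x → g.val 2 1 = π ^ (c₂ - m) * y →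
        g.val 2 0 = π ^ (c₃ - m) * z →
          (η g).1 = (Ideal.Quotient.mk ((Ideal.span {π} : Ideal O) ^ m) x,
              Ideal.Quotient.mk ((Ideal.span {π} : Ideal O) ^ m) y,
              Ideal.Quotient.mk ((Ideal.span {π} : Ideal O) ^ m) z) ∧
            ((η g).2.1 : O ⧸ (Ideal.span {π} : Ideal O) ^ m) =
              Ideal.Quotient.mk ((Ideal.span {π} : Ideal O) ^ m) (g.val 0 0) ∧
            ((η g).2.2.1 : O ⧸ (Ideal.span {π} : Ideal O) ^ m) =
              Ideal.Quotient.mk ((Ideal.span {π} : Ideal O) ^ m) (g.val 1 1) ∧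
            ((η g).2.2.2 : O ⧸ (Ideal.span {π} : Ideal O) ^ m) =
              Ideal.Quotient.mk ((Ideal.span {π} : Ideal O) ^ m) (g.val 2 2)) ∧
      (∀ g ∈ pSet π (c₁ - m) (c₂ - m) (c₃ - m),
        ∀ h ∈ pSet π (c₁ - m) (c₂ - m) (c₃ - m),
          η (g * h) = bMul (Ideal.Quotient.mk ((Ideal.span {π} : Ideal O) ^ m)
            (π ^ (c₁ + c₂ - c₃ - m))) (η g) (η h)) ∧
      (∀ b : BType (O ⧸ (Ideal.span {π} : Ideal O) ^ m),
        ∃ g ∈ pSet π (c₁ - m) (c₂ - m) (c₃ - m), η g = b) := by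
  have hμ1 : m ≤ c₁ + c₂ - c₃ := le_trans hμ (min_le_left _ _)
  have hμ2 : m ≤ c₃ - c₁ := le_trans hμ (le_trans (min_le_right _ _) (min_le_left _ _))
  have hμ3 : m ≤ c₃ - c₂ := le_trans hμ (le_trans (min_le_right _ _) (min_le_right _ _))
  have hπ0 : π ≠ 0 := hπ.ne_zero
  have hmax : IsLocalRing.maximalIdeal O = Ideal.span {π} := hπ.maximalIdeal_eq
  set I : Ideal O := (Ideal.span {π} : Ideal O) ^ m with hIdef
  have hIdvd : ∀ w : O, π ^ m ∣ w → w ∈ I := by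
    intro w hw
    rw [hIdef, Ideal.span_singleton_pow, Ideal.mem_span_singleton]
    exact hw
  have hqp : ∀ k : ℕ, m ≤ k → Ideal.Quotient.mk I (π ^ k) = 0 := by
    intro k hk
    rw [Ideal.Quotient.eq_zero_iff_mem]
    exact hIdvd _ (pow_dvd_pow π hk)
  have ppow : ∀ i j k l : ℕ, i + j = k + l → π ^ i * π ^ j = π ^ k * π ^ l := by
    intro i j k l hij
    rw [← pow_add, ← pow_add, hij]
  -- diagonal entries of matrices in pSet are units
  have diagU : ∀ g : GL (Fin 3) O, g ∈ pSet π (c₁ - m) (c₂ - m) (c₃ - m) →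
      IsUnit (g.val 0 0) ∧ IsUnit (g.val 1 1) ∧ IsUnit (g.val 2 2) := by
    intro g hg
    obtain ⟨hg1, hg2, hg3⟩ := hg
    have hle : ∀ k : ℕ, 1 ≤ k → ((Ideal.span {π} : Ideal O) ^ k ≤ Ideal.span {π}) :=
      fun k hk => Ideal.pow_le_self (by omega)
    have e1 : g.val 1 0 ∈ Ideal.span {π} := hle _ (by omega) hg1
    have e2 : g.val 2 0 ∈ Ideal.span {π} := hle _ (by omega) hg2
    have e3 : g.val 2 1 ∈ Ideal.span {π} := hle _ (by omega) hg3
    have hdet : IsUnit g.val.det := (Matrix.isUnit_iff_isUnit_det g.val).mp g.isUnit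
    have hdet' : g.val.det ∉ Ideal.span {π} := by
      intro hmem
      rw [← hmax] at hmem
      exact (IsLocalRing.mem_maximalIdeal _).mp hmem hdet
    have key : g.val 0 0 * g.val 1 1 * g.val 2 2 ∉ Ideal.span {π} := by
      intro hmem
      apply hdet'
      have hd : g.val.det = g.val 0 0 * g.val 1 1 * g.val 2 2 +
          (-(g.val 0 0 * (g.val 1 2 * g.val 2 1)) +
            (g.val 0 1 * (g.val 1 2 * g.val 2 0) - g.val 0 1 * (g.val 1 0 * g.val 2 2)) +
            (g.val 0 2 * (g.val 1 0 * g.val 2 1) - g.val 0 2 * (g.val 1 1 * g.val 2 0))) := by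
        rw [Matrix.det_fin_three]; ring
      rw [hd]
      refine Ideal.add_mem _ hmem (Ideal.add_mem _ (Ideal.add_mem _
        (neg_mem (Ideal.mul_mem_left _ _ (Ideal.mul_mem_left _ _ e3)))
        (Ideal.sub_mem _ (Ideal.mul_mem_left _ _ (Ideal.mul_mem_left _ _ e2))
          (Ideal.mul_mem_left _ _ (Ideal.mul_mem_right _ _ e1))))
        (Ideal.sub_mem _ (Ideal.mul_mem_left _ _ (Ideal.mul_mem_right _ _ e1))
          (Ideal.mul_mem_left _ _ (Ideal.mul_mem_left _ _ e2))))
    have hnm : ∀ a : O, ¬IsUnit a → a ∈ Ideal.span {π} := by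
      intro a ha
      rw [← hmax]
      exact (IsLocalRing.mem_maximalIdeal _).mpr ha
    refine ⟨?_, ?_, ?_⟩
    · by_contra hc
      exact key (Ideal.mul_mem_right _ _ (Ideal.mul_mem_right _ _ (hnm _ hc)))
    · by_contra hc
      exact key (Ideal.mul_mem_right _ _ (Ideal.mul_mem_left _ _ (hnm _ hc)))
    · by_contra hc
      exact key (Ideal.mul_mem_left _ _ (hnm _ hc))
  -- membership implies etaCond
  have memCond : ∀ g ∈ pSet π (c₁ - m) (c₂ - m) (c₃ - m),
      etaCond π (c₁ - m) (c₂ - m) (c₃ - m) I g := by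
    intro g hg
    obtain ⟨hu0, hu1, hu2⟩ := diagU g hg
    obtain ⟨hg1, hg2, hg3⟩ := hg
    rw [Ideal.span_singleton_pow, Ideal.mem_span_singleton] at hg1 hg2 hg3
    exact ⟨hg1, hg3, hg2, hu0.map _, hu1.map _, hu2.map _⟩
  refine ⟨etaFun π (c₁ - m) (c₂ - m) (c₃ - m) I, ?_, ?_, ?_⟩
  · intro g hg x y z hx hy hz
    exact etaFun_spec hπ0 (memCond g hg) hx hy hz
  · intro g hg h hh
    obtain ⟨xg, hxg⟩ := (memCond g hg).1
    obtain ⟨yg, hyg⟩ := (memCond g hg).2.1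
    obtain ⟨zg, hzg⟩ := (memCond g hg).2.2.1
    obtain ⟨xh, hxh⟩ := (memCond h hh).1
    obtain ⟨yh, hyh⟩ := (memCond h hh).2.1
    obtain ⟨zh, hzh⟩ := (memCond h hh).2.2.1
    have hX : (g * h).val 1 0 =
        π ^ (c₁ - m) * (xg * h.val 0 0 + g.val 1 1 * xh
          + π ^ (c₃ - c₁) * (g.val 1 2 * zh)) := by
      rw [Units.val_mul, Matrix.mul_apply, Fin.sum_univ_three, hxg, hxh, hzh]
      linear_combination (g.val 1 2 * zh) * ppow (c₃ - m) 0 (c₁ - m) (c₃ - c₁) (by omega)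
    have hY : (g * h).val 2 1 =
        π ^ (c₂ - m) * (π ^ (c₃ - c₂) * (zg * h.val 0 1) + yg * h.val 1 1
          + g.val 2 2 * yh) := by
      rw [Units.val_mul, Matrix.mul_apply, Fin.sum_univ_three, hzg, hyg, hyh]
      linear_combination (zg * h.val 0 1) * ppow (c₃ - m) 0 (c₂ - m) (c₃ - c₂) (by omega)
    have hZ : (g * h).val 2 0 =
        π ^ (c₃ - m) * (zg * h.val 0 0 + π ^ (c₁ + c₂ - c₃ - m) * (yg * xh)
          + g.val 2 2 * zh) := by
      rw [Units.val_mul, Matrix.mul_apply, Fin.sum_univ_three, hzg, hyg, hxh, hzh]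
      linear_combination (yg * xh) *
        ppow (c₂ - m) (c₁ - m) (c₃ - m) (c₁ + c₂ - c₃ - m) (by omega)
    have hmem : g * h ∈ pSet π (c₁ - m) (c₂ - m) (c₃ - m) := by
      refine ⟨?_, ?_, ?_⟩ <;> rw [Ideal.span_singleton_pow, Ideal.mem_span_singleton]
      · exact ⟨_, hX⟩
      · exact ⟨_, hZ⟩
      · exact ⟨_, hY⟩
    obtain ⟨P1, P2, P3, P4⟩ := etaFun_spec hπ0 (memCond _ hmem) hX hY hZ
    obtain ⟨G1, G2, G3, G4⟩ := etaFun_spec hπ0 (memCond g hg) hxg hyg hzg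
    obtain ⟨H1, H2, H3, H4⟩ := etaFun_spec hπ0 (memCond h hh) hxh hyh hzh
    set eg := etaFun π (c₁ - m) (c₂ - m) (c₃ - m) I g with heg
    set eh := etaFun π (c₁ - m) (c₂ - m) (c₃ - m) I h with heh
    have G1a : eg.1.1 = Ideal.Quotient.mk I xg := by rw [G1]
    have G1b : eg.1.2.1 = Ideal.Quotient.mk I yg := by rw [G1]
    have G1c : eg.1.2.2 = Ideal.Quotient.mk I zg := by rw [G1]
    have H1a : eh.1.1 = Ideal.Quotient.mk I xh := by rw [H1]
    have H1b : eh.1.2.1 = Ideal.Quotient.mk I yh := by rw [H1]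
    have H1c : eh.1.2.2 = Ideal.Quotient.mk I zh := by rw [H1]
    refine Prod.ext ?_ ?_
    · rw [P1, bMul]
      refine Prod.ext ?_ (Prod.ext ?_ ?_)
      · show Ideal.Quotient.mk I _ = eg.1.1 * (eh.2.1 : O ⧸ I) + (eg.2.2.1 : O ⧸ I) * eh.1.1
        rw [G1a, G3, H2, H1a]
        simp only [map_add, _root_.map_mul, hqp (c₃ - c₁) hμ2, zero_mul, add_zero]
      · show Ideal.Quotient.mk I _ =
          eg.1.2.1 * (eh.2.2.1 : O ⧸ I) + (eg.2.2.2 : O ⧸ I) * eh.1.2.1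
        rw [G1b, G4, H3, H1b]
        simp only [map_add, _root_.map_mul, hqp (c₃ - c₂) hμ3, zero_mul, zero_add]
      · show Ideal.Quotient.mk I _ = eg.1.2.2 * (eh.2.1 : O ⧸ I)
          + Ideal.Quotient.mk I (π ^ (c₁ + c₂ - c₃ - m)) * eg.1.2.1 * eh.1.1
          + (eg.2.2.2 : O ⧸ I) * eh.1.2.2
        rw [G1c, G1b, G4, H2, H1a, H1c]
        simp only [map_add, _root_.map_mul]
        ring
    · have d00 : (g * h).val 0 0 = g.val 0 0 * h.val 0 0
          + g.val 0 1 * (π ^ (c₁ - m) * xh) + g.val 0 2 * (π ^ (c₃ - m) * zh) := by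
        rw [Units.val_mul, Matrix.mul_apply, Fin.sum_univ_three, hxh, hzh]
      have d11 : (g * h).val 1 1 = π ^ (c₁ - m) * xg * h.val 0 1
          + g.val 1 1 * h.val 1 1 + g.val 1 2 * (π ^ (c₂ - m) * yh) := by
        rw [Units.val_mul, Matrix.mul_apply, Fin.sum_univ_three, hxg, hyh]
      have d22 : (g * h).val 2 2 = π ^ (c₃ - m) * zg * h.val 0 2
          + π ^ (c₂ - m) * yg * h.val 1 2 + g.val 2 2 * h.val 2 2 := by
        rw [Units.val_mul, Matrix.mul_apply, Fin.sum_univ_three, hzg, hyg]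
      have U1 : (etaFun π (c₁ - m) (c₂ - m) (c₃ - m) I (g * h)).2.1 = eg.2.1 * eh.2.1 := by
        apply Units.ext
        rw [P2, d00, Units.val_mul, G2, H2]
        simp only [map_add, _root_.map_mul, hqp (c₁ - m) (by omega), hqp (c₃ - m) (by omega),
          zero_mul, mul_zero, add_zero]
      have U2 : (etaFun π (c₁ - m) (c₂ - m) (c₃ - m) I (g * h)).2.2.1 = eg.2.2.1 * eh.2.2.1 := by
        apply Units.ext
        rw [P3, d11, Units.val_mul, G3, H3]
        simp only [map_add, _root_.map_mul, hqp (c₁ - m) (by omega), hqp (c₂ - m) (by omega),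
          zero_mul, mul_zero, zero_add, add_zero]
      have U3 : (etaFun π (c₁ - m) (c₂ - m) (c₃ - m) I (g * h)).2.2.2 = eg.2.2.2 * eh.2.2.2 := by
        apply Units.ext
        rw [P4, d22, Units.val_mul, G4, H4]
        simp only [map_add, _root_.map_mul, hqp (c₂ - m) (by omega), hqp (c₃ - m) (by omega),
          zero_mul, mul_zero, zero_add, add_zero]
      rw [bMul]
      exact Prod.ext U1 (Prod.ext U2 U3)
  · intro b
    obtain ⟨x, hx⟩ := Ideal.Quotient.mk_surjective b.1.1
    obtain ⟨y, hy⟩ := Ideal.Quotient.mk_surjective b.1.2.1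
    obtain ⟨z, hz⟩ := Ideal.Quotient.mk_surjective b.1.2.2
    obtain ⟨t₁, ht₁⟩ := Ideal.Quotient.mk_surjective ((b.2.1 : (O ⧸ I)ˣ) : O ⧸ I)
    obtain ⟨t₂, ht₂⟩ := Ideal.Quotient.mk_surjective ((b.2.2.1 : (O ⧸ I)ˣ) : O ⧸ I)
    obtain ⟨t₃, ht₃⟩ := Ideal.Quotient.mk_surjective ((b.2.2.2 : (O ⧸ I)ˣ) : O ⧸ I)
    have unitLift : ∀ (u : (O ⧸ I)ˣ) (t : O), Ideal.Quotient.mk I t = (u : O ⧸ I) →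
        IsUnit t := by
      intro u t ht
      by_contra hc
      have htm : t ∈ Ideal.span {π} := hmax ▸ (IsLocalRing.mem_maximalIdeal t).mpr hc
      obtain ⟨s, hs⟩ := Ideal.Quotient.mk_surjective ((u⁻¹ : (O ⧸ I)ˣ) : O ⧸ I)
      have h0 : Ideal.Quotient.mk I (t * s - 1) = 0 := by
        rw [map_sub, _root_.map_mul, ht, hs, _root_.map_one, Units.mul_inv, sub_self]
      rw [Ideal.Quotient.eq_zero_iff_mem] at h0
      have hsub : t * s - 1 ∈ Ideal.span {π} := Ideal.pow_le_self (by omega) h0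
      have hone : (1 : O) ∈ Ideal.span {π} := by
        have := Ideal.sub_mem _ (Ideal.mul_mem_right s _ htm) hsub
        simpa using this
      exact hπ.not_isUnit (Ideal.span_singleton_eq_top.mp ((Ideal.eq_top_iff_one _).mpr hone))
    have hu1 : IsUnit t₁ := unitLift b.2.1 t₁ ht₁
    have hu2 : IsUnit t₂ := unitLift b.2.2.1 t₂ ht₂
    have hu3 : IsUnit t₃ := unitLift b.2.2.2 t₃ ht₃
    set M : Matrix (Fin 3) (Fin 3) O :=
      !![t₁, 0, 0; π ^ (c₁ - m) * x, t₂, 0; π ^ (c₃ - m) * z, π ^ (c₂ - m) * y, t₃] with hM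
    have hMdet : M.det = t₁ * t₂ * t₃ := by
      rw [Matrix.det_fin_three]
      simp [hM]
    have hdet : IsUnit M.det := hMdet ▸ (hu1.mul hu2).mul hu3
    refine ⟨⟨M, M⁻¹, Matrix.mul_nonsing_inv M hdet, Matrix.nonsing_inv_mul M hdet⟩, ?_, ?_⟩
    · refine ⟨?_, ?_, ?_⟩ <;> rw [Ideal.span_singleton_pow, Ideal.mem_span_singleton]
      · exact ⟨x, by simp [hM]⟩
      · exact ⟨z, by simp [hM]⟩
      · exact ⟨y, by simp [hM]⟩
    · set g : GL (Fin 3) O :=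
        ⟨M, M⁻¹, Matrix.mul_nonsing_inv M hdet, Matrix.nonsing_inv_mul M hdet⟩ with hg
      have gval : g.val = M := rfl
      have gx : g.val 1 0 = π ^ (c₁ - m) * x := by rw [gval]; simp [hM]
      have gy : g.val 2 1 = π ^ (c₂ - m) * y := by rw [gval]; simp [hM]
      have gz : g.val 2 0 = π ^ (c₃ - m) * z := by rw [gval]; simp [hM]
      have g00 : g.val 0 0 = t₁ := by rw [gval]; simp [hM]
      have g11 : g.val 1 1 = t₂ := by rw [gval]; simp [hM]
      have g22 : g.val 2 2 = t₃ := by rw [gval]; simp [hM]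
      have hmem : g ∈ pSet π (c₁ - m) (c₂ - m) (c₃ - m) := by
        refine ⟨?_, ?_, ?_⟩ <;> rw [Ideal.span_singleton_pow, Ideal.mem_span_singleton]
        · exact ⟨x, gx⟩
        · exact ⟨z, gz⟩
        · exact ⟨y, gy⟩
      obtain ⟨Q1, Q2, Q3, Q4⟩ := etaFun_spec hπ0 (memCond g hmem) gx gy gz
      refine Prod.ext ?_ ?_
      · rw [Q1, hx, hy, hz]
      · refine Prod.ext (Units.ext ?_) (Prod.ext (Units.ext ?_) (Units.ext ?_))
        · rw [Q2, g00, ht₁]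
        · rw [Q3, g11, ht₂]
        · rw [Q4, g22, ht₃]
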